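/- arXiv:2504.14158 — 5 statements merged into one kernel-verified Lean document; each statement's English description precedes it below -/
import Mathlib

section
/- Let Θ, Ψ be convex and closed sets of effects on a finite-dimensional Hilbert space with Θ nonempty. Then Θ ≼_dem Ψ (for all density operators ρ, inf_{M∈Θ} tr(Mρ) ≤ inf_{N∈Ψ} tr(Nρ)) if and only if Θ ≤_S Ψ (for every N ∈ Ψ there exists M ∈ Θ with M ⊑ N). -/
open Matrix
open scoped ComplexOrder

noncomputable section

/-- Löwner order: `A ⊑ B` iff `B - A` is positive semidefinite. -/
def Loewner {d : Type*} [Fintype d] (A B : Matrix d d ℂ) : Prop :=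
  (B - A).PosSemidef

/-- An effect: a positive semidefinite operator bounded above by the identity. -/
def IsEffect {d : Type*} [Fintype d] [DecidableEq d] (M : Matrix d d ℂ) : Prop :=
  M.PosSemidef ∧ (1 - M).PosSemidef

/-- A (partial) density operator: positive semidefinite with trace at most 1. -/
def IsDensity {d : Type*} [Fintype d] (ρ : Matrix d d ℂ) : Prop :=
  ρ.PosSemidef ∧ ρ.trace.re ≤ 1

/-- An orthogonal projector: Hermitian idempotent. -/
def IsProj {d : Type*} [Fintype d] (P : Matrix d d ℂ) : Prop :=
  P.IsHermitian ∧ P * P = P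

-- Demonic expectation: `inf_{M ∈ Θ} tr(M ρ)`, with the convention that the
-- infimum over the empty set is `tr ρ`.
open Classical in
def demExp {d : Type*} [Fintype d] (Θ : Set (Matrix d d ℂ)) (ρ : Matrix d d ℂ) : ℝ :=
  if Θ = ∅ then ρ.trace.re else sInf ((fun M => (M * ρ).trace.re) '' Θ)

/-- Angelic expectation: `sup_{M ∈ Θ} tr(M ρ)`; note `sSup ∅ = 0` in `ℝ`,
matching the convention that the supremum over the empty set is `0`. -/
def angExp {d : Type*} [Fintype d] (Θ : Set (Matrix d d ℂ)) (ρ : Matrix d d ℂ) : ℝ :=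
  sSup ((fun M => (M * ρ).trace.re) '' Θ)

/-- The extension `I_{Fin m} ⊗ Φ` of a super-operator `Φ`, acting blockwise. -/
def tensorMap {n : ℕ} (Φ : Matrix (Fin n) (Fin n) ℂ → Matrix (Fin n) (Fin n) ℂ) (m : ℕ)
    (A : Matrix (Fin m × Fin n) (Fin m × Fin n) ℂ) :
    Matrix (Fin m × Fin n) (Fin m × Fin n) ℂ :=
  fun p q => Φ (Matrix.of fun a b => A (p.1, a) (q.1, b)) p.2 q.2

/-- Complete positivity: every extension `I_K ⊗ Φ` maps positive semidefinite
matrices to positive semidefinite matrices. -/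
def IsCP {n : ℕ} (Φ : Matrix (Fin n) (Fin n) ℂ → Matrix (Fin n) (Fin n) ℂ) : Prop :=
  ∀ (m : ℕ) (A : Matrix (Fin m × Fin n) (Fin m × Fin n) ℂ),
    A.PosSemidef → (tensorMap Φ m A).PosSemidef

/-- Trace-nonincreasing on positive operators. -/
def IsTNI {n : ℕ} (Φ : Matrix (Fin n) (Fin n) ℂ → Matrix (Fin n) (Fin n) ℂ) : Prop :=
  ∀ A : Matrix (Fin n) (Fin n) ℂ, A.PosSemidef → (Φ A).trace.re ≤ A.trace.re

/-- Trace-preserving on positive operators. -/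
def IsTP {n : ℕ} (Φ : Matrix (Fin n) (Fin n) ℂ → Matrix (Fin n) (Fin n) ℂ) : Prop :=
  ∀ A : Matrix (Fin n) (Fin n) ℂ, A.PosSemidef → (Φ A).trace = A.trace

/-- CPTN super-operator: linear, completely positive, and trace-nonincreasing. -/
def IsCPTN {n : ℕ} (Φ : Matrix (Fin n) (Fin n) ℂ → Matrix (Fin n) (Fin n) ℂ) : Prop :=
  IsLinearMap ℂ Φ ∧ IsCP Φ ∧ IsTNI Φ

/-- The Choi matrix `J(Φ) = (Φ ⊗ I)(Ω)` of `Φ`, where `Ω` is the maximally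
entangled state on `H ⊗ H`. -/
def choi {n : ℕ} (Φ : Matrix (Fin n) (Fin n) ℂ → Matrix (Fin n) (Fin n) ℂ) :
    Matrix (Fin n × Fin n) (Fin n × Fin n) ℂ :=
  fun p q => (1 / (n : ℂ)) * Φ (Matrix.single p.2 q.2 1) p.1 q.1


section DemAux
variable {n : ℕ}

lemma psd_diag_nonneg {A : Matrix (Fin n) (Fin n) ℂ} (hA : A.PosSemidef) (i : Fin n) :
    0 ≤ A i i := by
  simpa [Matrix.mulVec_single, ← Pi.single_star, single_dotProduct] using hA.dotProduct_mulVec_nonneg (Pi.single i 1)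

lemma psd_trace_nonneg {A : Matrix (Fin n) (Fin n) ℂ} (hA : A.PosSemidef) : 0 ≤ A.trace :=
  Finset.sum_nonneg fun i _ => psd_diag_nonneg hA i

lemma psd_mul_trace_nonneg {A B : Matrix (Fin n) (Fin n) ℂ} (hA : A.PosSemidef)
    (hB : B.PosSemidef) : 0 ≤ (A * B).trace := by
  obtain ⟨S, hS⟩ : ∃ S : Matrix (Fin n) (Fin n) ℂ, A = star S * S := by
    open scoped MatrixOrder in exact CStarAlgebra.nonneg_iff_eq_star_mul_self.mp hA.nonneg
  have h2 : (A * B).trace = (S * B * Sᴴ).trace := by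
    rw [hS, star_eq_conjTranspose, mul_assoc, Matrix.trace_mul_comm]
  have h3 : (S * B * Sᴴ).PosSemidef := hB.mul_mul_conjTranspose_same S
  rw [h2]; exact psd_trace_nonneg h3


lemma psd_pair {A : Matrix (Fin n) (Fin n) ℂ} (hA : A.PosSemidef) (i j : Fin n) (hij : i ≠ j)
    (a b : ℂ) :
    0 ≤ star a * (A i i * a + A i j * b) + star b * (A j i * a + A j j * b) := by
  have h := hA.dotProduct_mulVec_nonneg (Pi.single i a + Pi.single j b)
  rw [Matrix.mulVec_add, Matrix.mulVec_single, Matrix.mulVec_single, star_add,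
    ← Pi.single_star, ← Pi.single_star, add_dotProduct, single_dotProduct,
    single_dotProduct] at h
  simpa [hij, hij.symm, mul_comm] using h

lemma effect_diag_re {M : Matrix (Fin n) (Fin n) ℂ} (hM : IsEffect M) (i : Fin n) :
    M i i = ((M i i).re : ℂ) ∧ 0 ≤ (M i i).re ∧ (M i i).re ≤ 1 := by
  have h1 := psd_diag_nonneg hM.1 i
  have h2 := psd_diag_nonneg hM.2 i
  rw [Matrix.sub_apply, Matrix.one_apply_eq] at h2
  rw [Complex.le_def] at h1 h2
  simp only [Complex.zero_re, Complex.zero_im, Complex.sub_re, Complex.sub_im,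
    Complex.one_re, Complex.one_im] at h1 h2
  refine ⟨?_, h1.1, by linarith [h2.1]⟩
  apply Complex.ext <;> simp [← h1.2]

lemma effect_abs_le {M : Matrix (Fin n) (Fin n) ℂ} (hM : IsEffect M) (i j : Fin n) :
    ‖M i j‖ ≤ 1 := by
  obtain ⟨hii, hii0, hii1⟩ := effect_diag_re hM i
  by_cases hij : i = j
  · subst hij; rw [hii, Complex.norm_real, Real.norm_eq_abs, abs_of_nonneg hii0]; exact hii1
  obtain ⟨hjj, hjj0, hjj1⟩ := effect_diag_re hM j
  have hji : M j i = star (M i j) := by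
    rw [← hM.1.isHermitian.apply i j, star_star]
  by_cases hz0 : M i j = 0
  · rw [hz0]; simp
  set r : ℝ := ‖M i j‖ with hr
  have hrpos : 0 < r := by simpa [hr] using (norm_pos_iff.mpr hz0)
  have hzz : M i j * star (M i j) = ((r^2 : ℝ) : ℂ) := by
    rw [Complex.star_def, Complex.mul_conj, Complex.normSq_eq_norm_sq, ← hr]
  have hkey := psd_pair hM.1 i j hij (r : ℂ) (-(star (M i j)))
  rw [hji] at hkey
  have hexp : star (r:ℂ) * (M i i * r + M i j * (-(star (M i j)))) +
      star (-(star (M i j))) * (star (M i j) * r + M j j * (-(star (M i j))))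
      = ((r^2 * (M i i).re + r^2 * (M j j).re - 2*r^3 : ℝ) : ℂ) := by
    simp only [star_neg, star_star, Complex.star_def, Complex.conj_ofReal, Complex.conj_conj]
    rw [Complex.star_def] at hzz
    linear_combination (norm := (push_cast; ring1))
      (M j j - 2*(r:ℂ)) * hzz + ((r:ℂ)^2) * hii + ((r:ℂ)^2) * hjj
  rw [hexp] at hkey
  have hre : (0:ℝ) ≤ r^2 * (M i i).re + r^2 * (M j j).re - 2*r^3 :=
    Complex.zero_le_real.mp hkey
  nlinarith [sq_nonneg r, mul_pos hrpos hrpos]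

instance matLCS : LocallyConvexSpace ℝ (Matrix (Fin n) (Fin n) ℂ) :=
  inferInstanceAs (LocallyConvexSpace ℝ (Fin n → Fin n → ℂ))

instance matCSMul : ContinuousSMul ℝ (Matrix (Fin n) (Fin n) ℂ) :=
  inferInstanceAs (ContinuousSMul ℝ (Fin n → Fin n → ℂ))

instance matTAG : IsTopologicalAddGroup (Matrix (Fin n) (Fin n) ℂ) :=
  inferInstanceAs (IsTopologicalAddGroup (Fin n → Fin n → ℂ))

lemma effects_compact {Θ : Set (Matrix (Fin n) (Fin n) ℂ)} (hΘe : ∀ M ∈ Θ, IsEffect M)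
    (hΘcl : IsClosed Θ) : IsCompact Θ := by
  have hK : IsCompact {M : Matrix (Fin n) (Fin n) ℂ | ∀ i j, M i j ∈ Metric.closedBall (0:ℂ) 1} := by
    have h : IsCompact ((Set.univ.pi fun _ : Fin n =>
        Set.univ.pi fun _ : Fin n => Metric.closedBall (0:ℂ) 1) : Set (Fin n → Fin n → ℂ)) :=
      isCompact_univ_pi fun _ => isCompact_univ_pi fun _ => isCompact_closedBall (0:ℂ) 1
    have hset : {M : Matrix (Fin n) (Fin n) ℂ | ∀ i j, M i j ∈ Metric.closedBall (0:ℂ) 1}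
        = ((Set.univ.pi fun _ : Fin n =>
        Set.univ.pi fun _ : Fin n => Metric.closedBall (0:ℂ) 1) : Set (Fin n → Fin n → ℂ)) := by
      ext M
      exact ⟨fun hM i _ j _ => hM i j, fun hM i j => hM i (Set.mem_univ i) j (Set.mem_univ j)⟩
    rw [hset]; exact h
  refine hK.of_isClosed_subset hΘcl fun M hM i j => ?_
  rw [Metric.mem_closedBall, dist_zero_right]
  exact effect_abs_le (hΘe M hM) i j

lemma psd_closed : IsClosed {A : Matrix (Fin n) (Fin n) ℂ | A.PosSemidef} := by
  have h1 : IsClosed {A : Matrix (Fin n) (Fin n) ℂ | A.IsHermitian} := by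
    have : {A : Matrix (Fin n) (Fin n) ℂ | A.IsHermitian}
        = {A : Matrix (Fin n) (Fin n) ℂ | Aᴴ = A} := rfl
    rw [this]
    exact isClosed_eq (continuous_id.matrix_conjTranspose) continuous_id
  have h2 : IsClosed {A : Matrix (Fin n) (Fin n) ℂ |
      ∀ x : Fin n → ℂ, 0 ≤ star x ⬝ᵥ A.mulVec x} := by
    rw [Set.setOf_forall]
    refine isClosed_iInter fun x => ?_
    have hc : Continuous fun A : Matrix (Fin n) (Fin n) ℂ => star x ⬝ᵥ A.mulVec x :=
      (continuous_const.dotProduct (continuous_id.matrix_mulVec continuous_const))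
    have hcl : IsClosed {z : ℂ | 0 ≤ z} := by
      have : {z : ℂ | 0 ≤ z} = Complex.re ⁻¹' (Set.Ici 0) ∩ Complex.im ⁻¹' {0} := by
        ext z; simp [Complex.le_def, eq_comm]
      rw [this]
      exact (isClosed_Ici.preimage Complex.continuous_re).inter
        (isClosed_singleton.preimage Complex.continuous_im)
    exact hcl.preimage hc
  have : {A : Matrix (Fin n) (Fin n) ℂ | A.PosSemidef}
      = {A : Matrix (Fin n) (Fin n) ℂ | A.IsHermitian} ∩
        {A : Matrix (Fin n) (Fin n) ℂ | ∀ x, 0 ≤ star x ⬝ᵥ A.mulVec x} := by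
    ext A; exact Matrix.posSemidef_iff_dotProduct_mulVec
  rw [this]; exact h1.inter h2

lemma psd_smul_real {A : Matrix (Fin n) (Fin n) ℂ} (hA : A.PosSemidef) {a : ℝ} (ha : 0 ≤ a) :
    (a • A).PosSemidef := by
  refine Matrix.PosSemidef.of_dotProduct_mulVec_nonneg ?_ ?_
  · have : (a • A)ᴴ = a • Aᴴ := by
      rw [Matrix.conjTranspose_smul, star_trivial]
    rw [Matrix.IsHermitian, this, hA.1.eq]
  · intro x
    have : star x ⬝ᵥ (a • A).mulVec x = (a:ℂ) * (star x ⬝ᵥ A.mulVec x) := by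
      rw [Matrix.smul_mulVec, dotProduct_smul]
      simp [Complex.real_smul]
    rw [this]
    exact mul_nonneg (by exact_mod_cast Complex.zero_le_real.mpr ha) (hA.dotProduct_mulVec_nonneg x)

lemma exists_psd_rep (f : Matrix (Fin n) (Fin n) ℂ →L[ℝ] ℝ)
    (hf : ∀ A : Matrix (Fin n) (Fin n) ℂ, A.PosSemidef → 0 ≤ f A) :
    ∃ H : Matrix (Fin n) (Fin n) ℂ, H.PosSemidef ∧
      ∀ X : Matrix (Fin n) (Fin n) ℂ, X.IsHermitian → (H * X).trace = ((f X : ℝ) : ℂ) := by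
  classical
  set B : Matrix (Fin n) (Fin n) ℂ := fun j i =>
    ((f (Matrix.single i j 1) : ℝ) : ℂ)
      - Complex.I * ((f (Complex.I • Matrix.single i j 1) : ℝ) : ℂ) with hB
  have hrep : ∀ X : Matrix (Fin n) (Fin n) ℂ, ((B * X).trace).re = f X := by
    intro X
    have hcoe : ∀ (r : ℝ) (A : Matrix (Fin n) (Fin n) ℂ), (r : ℂ) • A = r • A := by
      intro r A; ext a b; simp [Complex.real_smul]
    have hsplit : ∀ (i j : Fin n), Matrix.single i j (X i j)
        = (X i j).re • Matrix.single i j (1:ℂ)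
          + (X i j).im • (Complex.I • Matrix.single i j (1:ℂ)) := by
      intro i j
      have h1 : Matrix.single i j (X i j) = X i j • Matrix.single i j (1:ℂ) := by
        rw [Matrix.smul_single, smul_eq_mul, mul_one]
      rw [h1]
      have h2 : X i j = ((X i j).re : ℂ) + ((X i j).im : ℂ) * Complex.I :=
        (Complex.re_add_im _).symm
      nth_rewrite 1 [h2]
      rw [add_smul, mul_smul, hcoe, hcoe]
    calc ((B * X).trace).re
        = ∑ j, ∑ i, (B j i * X i j).re := by
          simp [Matrix.trace, Matrix.mul_apply, Matrix.diag, Complex.re_sum]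
      _ = ∑ i, ∑ j, ((X i j).re * f (Matrix.single i j 1)
            + (X i j).im * f (Complex.I • Matrix.single i j 1)) := by
          rw [Finset.sum_comm]
          refine Finset.sum_congr rfl fun i _ => Finset.sum_congr rfl fun j _ => ?_
          simp [hB, Complex.mul_re]
          ring
      _ = f X := by
          conv_rhs => rw [matrix_eq_sum_single X]
          rw [map_sum]
          refine Finset.sum_congr rfl fun i _ => ?_
          rw [map_sum]
          refine Finset.sum_congr rfl fun j _ => ?_
          rw [hsplit i j, map_add, f.map_smul, f.map_smul]
          simp
  set H : Matrix (Fin n) (Fin n) ℂ := ((1:ℝ)/2) • (B + Bᴴ) with hH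
  have htr : ∀ X : Matrix (Fin n) (Fin n) ℂ, X.IsHermitian →
      (H * X).trace = ((f X : ℝ) : ℂ) := by
    intro X hX
    have h1 : (Bᴴ * X).trace = star ((B * X).trace) := by
      rw [← Matrix.trace_conjTranspose, Matrix.conjTranspose_mul,
        Matrix.trace_mul_comm, hX.eq]
    have h2 : (H * X).trace = ((1:ℝ)/2) • ((B * X).trace + star ((B * X).trace)) := by
      rw [hH, Matrix.smul_mul, Matrix.trace_smul, Matrix.add_mul, Matrix.trace_add, h1]
    rw [h2, Complex.star_def, Complex.add_conj, ← hrep X]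
    simp [Complex.real_smul]
  refine ⟨H, Matrix.PosSemidef.of_dotProduct_mulVec_nonneg ?_ ?_, htr⟩
  · show Hᴴ = H
    rw [hH, Matrix.conjTranspose_smul, star_trivial, Matrix.conjTranspose_add,
      Matrix.conjTranspose_conjTranspose, add_comm]
  · intro x
    have hXX : (Matrix.vecMulVec x (star x)).PosSemidef := by
      rw [Matrix.vecMulVec_eq (Fin 1), ← Matrix.conjTranspose_replicateCol]
      exact Matrix.posSemidef_self_mul_conjTranspose _
    have hdot : star x ⬝ᵥ H.mulVec x = (H * Matrix.vecMulVec x (star x)).trace := by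
      calc star x ⬝ᵥ H.mulVec x = ∑ i, ∑ j, star (x i) * (H i j * x j) := by
            simp [dotProduct, Matrix.mulVec, Finset.mul_sum]
        _ = (H * Matrix.vecMulVec x (star x)).trace := by
            simp only [Matrix.trace, Matrix.diag, Matrix.mul_apply, Matrix.vecMulVec_apply,
              Pi.star_apply]
            refine Finset.sum_congr rfl fun i _ => Finset.sum_congr rfl fun j _ => ?_
            ring
    rw [hdot, htr _ hXX.isHermitian]
    exact Complex.zero_le_real.mpr (hf _ hXX)

end DemAux

theorem dem_iff_smyth {n : ℕ} (Θ Ψ : Set (Matrix (Fin n) (Fin n) ℂ))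
    (hΘe : ∀ M ∈ Θ, IsEffect M) (hΨe : ∀ N ∈ Ψ, IsEffect N)
    (hΘcv : Convex ℝ Θ) (hΨcv : Convex ℝ Ψ)
    (hΘcl : IsClosed Θ) (hΨcl : IsClosed Ψ)
    (hne : Θ.Nonempty) :
    (∀ ρ : Matrix (Fin n) (Fin n) ℂ, IsDensity ρ → demExp Θ ρ ≤ demExp Ψ ρ) ↔
      (∀ N ∈ Ψ, ∃ M ∈ Θ, Loewner M N) := by
  classical
  have hΘne : Θ ≠ ∅ := Set.nonempty_iff_ne_empty.mp hne
  constructor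
  · -- demonic refinement implies Smyth order
    intro h N hN
    by_contra hcon
    push_neg at hcon
    have hΨne : Ψ ≠ ∅ := Set.nonempty_iff_ne_empty.mp ⟨N, hN⟩
    set C : Set (Matrix (Fin n) (Fin n) ℂ) := (fun M => N - M) '' Θ with hC
    have hCcv : Convex ℝ C := by
      rintro x ⟨Mx, hMx, rfl⟩ y ⟨My, hMy, rfl⟩ a b ha hb hab
      refine ⟨a • Mx + b • My, hΘcv hMx hMy ha hb hab, ?_⟩
      have hN' : a • N + b • N = N := by rw [← add_smul, hab, one_smul]
      have hsplit2 : a • (N - Mx) + b • (N - My)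
          = (a • N + b • N) - (a • Mx + b • My) := by
        rw [smul_sub, smul_sub]; abel
      rw [hsplit2, hN']
    have hCcp : IsCompact C :=
      (effects_compact hΘe hΘcl).image (continuous_const.sub continuous_id)
    have hPcv : Convex ℝ {A : Matrix (Fin n) (Fin n) ℂ | A.PosSemidef} := by
      intro A hA B hB a b ha hb _
      exact (psd_smul_real hA ha).add (psd_smul_real hB hb)
    have hdisj : Disjoint C {A : Matrix (Fin n) (Fin n) ℂ | A.PosSemidef} := by
      rw [Set.disjoint_left]
      rintro A ⟨M, hM, rfl⟩ hA
      exact hcon M hM hA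
    obtain ⟨f, u, v, hfC, huv, hfP⟩ :=
      geometric_hahn_banach_compact_closed hCcv hCcp hPcv psd_closed hdisj
    have hv0 : v < 0 := by simpa using hfP 0 Matrix.PosSemidef.zero
    have hu0 : u < 0 := huv.trans hv0
    have hfP' : ∀ A : Matrix (Fin n) (Fin n) ℂ, A.PosSemidef → 0 ≤ f A := by
      intro A hA
      by_contra hneg
      push_neg at hneg
      have hs : (0:ℝ) ≤ v / f A := le_of_lt (div_pos_of_neg_of_neg hv0 hneg)
      have hvv := hfP _ (psd_smul_real hA hs)
      rw [f.map_smul, smul_eq_mul, div_mul_cancel₀ _ (ne_of_lt hneg)] at hvv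
      exact lt_irrefl v hvv
    obtain ⟨H, hHpsd, hHtr⟩ := exists_psd_rep f hfP'
    set c : ℝ := H.trace.re with hcdef
    have hc0 : 0 ≤ c := (Complex.le_def.mp (psd_trace_nonneg hHpsd)).1
    set t : ℝ := max c 1 with htdef
    have ht1 : (1:ℝ) ≤ t := le_max_right _ _
    have ht0 : (0:ℝ) < t := lt_of_lt_of_le one_pos ht1
    set ρ : Matrix (Fin n) (Fin n) ℂ := t⁻¹ • H with hρdef
    have hρpsd : ρ.PosSemidef := psd_smul_real hHpsd (inv_nonneg.mpr ht0.le)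
    have hρden : IsDensity ρ := by
      refine ⟨hρpsd, ?_⟩
      rw [hρdef, Matrix.trace_smul]
      have h1 : (t⁻¹ • H.trace).re = t⁻¹ * c := by
        simp [Complex.real_smul, Complex.mul_re, hcdef]
      rw [h1]
      calc t⁻¹ * c ≤ t⁻¹ * t :=
            mul_le_mul_of_nonneg_left (le_max_left _ _) (inv_nonneg.mpr ht0.le)
        _ = 1 := inv_mul_cancel₀ (ne_of_gt ht0)
    have htrM : ∀ M : Matrix (Fin n) (Fin n) ℂ,
        (M * ρ).trace.re = t⁻¹ * (H * M).trace.re := by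
      intro M
      rw [hρdef, Matrix.mul_smul, Matrix.trace_smul, Matrix.trace_mul_comm]
      simp [Complex.real_smul, Complex.mul_re]
    have hfNM : ∀ M ∈ Θ, (H * N).trace.re - (H * M).trace.re < u := by
      intro M hM
      have h1 : f (N - M) < u := hfC _ ⟨M, hM, rfl⟩
      have h2 : (H * (N - M)).trace = ((f (N - M) : ℝ) : ℂ) :=
        hHtr _ (((hΨe N hN).1.1).sub ((hΘe M hM).1.1))
      rw [Matrix.mul_sub, Matrix.trace_sub] at h2
      have h3 : (H * N).trace.re - (H * M).trace.re = f (N - M) := by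
        have := congrArg Complex.re h2
        simpa [Complex.sub_re] using this
      linarith
    have hdem := h ρ hρden
    rw [demExp, demExp, if_neg hΘne, if_neg hΨne] at hdem
    have hlb : t⁻¹ * ((H * N).trace.re - u)
        ≤ sInf ((fun M => (M * ρ).trace.re) '' Θ) := by
      apply le_csInf (hne.image _)
      rintro r ⟨M, hM, rfl⟩
      simp only
      rw [htrM M]
      exact mul_le_mul_of_nonneg_left (by linarith [hfNM M hM]) (inv_nonneg.mpr ht0.le)
    have hub : sInf ((fun M => (M * ρ).trace.re) '' Ψ) ≤ t⁻¹ * (H * N).trace.re := by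
      have hbdd : BddBelow ((fun M => (M * ρ).trace.re) '' Ψ) := by
        refine ⟨0, ?_⟩
        rintro r ⟨M, hM, rfl⟩
        exact (Complex.le_def.mp (psd_mul_trace_nonneg (hΨe M hM).1 hρpsd)).1
      calc sInf ((fun M => (M * ρ).trace.re) '' Ψ)
          ≤ (N * ρ).trace.re := csInf_le hbdd (Set.mem_image_of_mem _ hN)
        _ = t⁻¹ * (H * N).trace.re := htrM N
    have hfin : t⁻¹ * ((H * N).trace.re - u) ≤ t⁻¹ * (H * N).trace.re :=
      le_trans hlb (le_trans hdem hub)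
    have hpos := mul_pos (inv_pos.mpr ht0) (neg_pos.mpr hu0)
    nlinarith
  · -- Smyth order implies demonic refinement
    intro h ρ hρ
    have hbddΘ : BddBelow ((fun M => (M * ρ).trace.re) '' Θ) := by
      refine ⟨0, ?_⟩
      rintro r ⟨M, hM, rfl⟩
      exact (Complex.le_def.mp (psd_mul_trace_nonneg (hΘe M hM).1 hρ.1)).1
    by_cases hΨ : Ψ = ∅
    · rw [demExp, demExp, if_pos hΨ, if_neg hΘne]
      obtain ⟨M0, hM0⟩ := hne
      have hb : (M0 * ρ).trace.re ≤ ρ.trace.re := by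
        have h0 := psd_mul_trace_nonneg (hΘe M0 hM0).2 hρ.1
        rw [Matrix.sub_mul, Matrix.one_mul, Matrix.trace_sub] at h0
        have h1 := (Complex.le_def.mp h0).1
        simp only [Complex.zero_re, Complex.sub_re] at h1
        linarith
      exact le_trans (csInf_le hbddΘ (Set.mem_image_of_mem _ hM0)) hb
    · rw [demExp, demExp, if_neg hΘne, if_neg hΨ]
      apply le_csInf ((Set.nonempty_iff_ne_empty.mpr hΨ).image _)
      rintro r ⟨N, hN, rfl⟩
      obtain ⟨M, hM, hMN⟩ := h N hN
      refine le_trans (csInf_le hbddΘ (Set.mem_image_of_mem _ hM)) ?_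
      have h0 := psd_mul_trace_nonneg (hMN : (N - M).PosSemidef) hρ.1
      rw [Matrix.sub_mul, Matrix.trace_sub] at h0
      have h1 := (Complex.le_def.mp h0).1
      simp only [Complex.zero_re, Complex.sub_re] at h1
      simp only
      linarith
end
end

section
/- Let E, F be completely positive trace-nonincreasing super-operators on L(H), H finite-dimensional. Then the following are equivalent: (i) F − E is completely positive; (ii) for every finite-dimensional Hilbert space K and every positive operator A on K ⊗ H with A ⊑ I, (I_K ⊗ E)(A) ⊑ (I_K ⊗ F)(A); (iii) E†(N) ⊑ F†(N) for every effect N on K ⊗ H and every finite-dimensional K. -/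
open Matrix
open scoped ComplexOrder

noncomputable section

variable {d : Type*} [Fintype d] [DecidableEq d]

lemma qform_trace (M : Matrix d d ℂ) (x : d → ℂ) :
    (M * vecMulVec x (star x)).trace = star x ⬝ᵥ M *ᵥ x := by
  simp only [Matrix.trace, Matrix.diag_apply, Matrix.mul_apply, Matrix.vecMulVec_apply,
    dotProduct, Matrix.mulVec, Pi.star_apply]
  refine Finset.sum_congr rfl fun k _ => ?_
  rw [Finset.mul_sum]
  refine Finset.sum_congr rfl fun l _ => ?_
  ring

lemma vecMulVec_psd (x : d → ℂ) : (vecMulVec x (star x)).PosSemidef := by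
  refine posSemidef_iff_dotProduct_mulVec.mpr ⟨?_, ?_⟩
  · ext k l
    simp [Matrix.conjTranspose_apply, Matrix.vecMulVec_apply, mul_comm]
  · intro y
    have : star y ⬝ᵥ (vecMulVec x (star x)) *ᵥ y
        = star (star x ⬝ᵥ y) * (star x ⬝ᵥ y) := by
      have hz : star (star x ⬝ᵥ y) = ∑ l, x l * star (y l) := by
        simp only [dotProduct, Pi.star_apply, star_sum, star_mul', star_star]
      rw [hz]
      simp only [dotProduct, Matrix.mulVec, Matrix.vecMulVec_apply, Pi.star_apply]
      rw [Finset.sum_mul_sum]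
      simp only [Finset.mul_sum]
      refine Finset.sum_congr rfl fun k _ => Finset.sum_congr rfl fun l _ => ?_
      ring
    rw [this]
    exact star_mul_self_nonneg _

lemma psd_diag_nonneg_s6 {M : Matrix d d ℂ} (hM : M.PosSemidef) (i : d) : 0 ≤ M i i := by
  have := hM.dotProduct_mulVec_nonneg (Pi.single i 1)
  simpa [Matrix.mulVec_single, dotProduct, Pi.single_apply, apply_ite] using this

lemma psd_trace_nonneg_s6 {M : Matrix d d ℂ} (hM : M.PosSemidef) : 0 ≤ M.trace :=
  Finset.sum_nonneg fun i _ => psd_diag_nonneg_s6 hM i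

lemma psd_of_qform (M : Matrix d d ℂ) (h : ∀ x : d → ℂ, 0 ≤ star x ⬝ᵥ M *ᵥ x) :
    M.PosSemidef := by
  refine posSemidef_iff_dotProduct_mulVec.mpr ⟨?_, h⟩
  rw [isHermitian_iff_isSymmetric, LinearMap.isSymmetric_iff_inner_map_self_real]
  intro v
  obtain ⟨x, rfl⟩ := (WithLp.equiv 2 (d → ℂ)).symm.surjective v
  rw [WithLp.equiv_symm_apply, Matrix.toEuclideanLin_toLp, EuclideanSpace.inner_toLp_toLp, dotProduct_comm]
  have h1 : star ((Matrix.toLin' M) x) ⬝ᵥ x = (starRingEnd ℂ) (star x ⬝ᵥ M *ᵥ x) := by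
    simp only [Matrix.toLin'_apply, dotProduct, Pi.star_apply, map_sum]
    refine Finset.sum_congr rfl fun k _ => ?_
    simp only [starRingEnd_apply, star_mul', star_star]
    ring
  have h2 : (starRingEnd ℂ) (star x ⬝ᵥ M *ᵥ x) = star x ⬝ᵥ M *ᵥ x := by
    have := h x
    rw [Complex.nonneg_iff] at this
    exact Complex.conj_eq_iff_im.mpr this.2.symm
  rw [h1, h2, h2]

lemma psd_smul {A : Matrix d d ℂ} (hA : A.PosSemidef) {c : ℝ} (hc : 0 ≤ c) :
    (((c : ℂ)) • A).PosSemidef := by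
  refine posSemidef_iff_dotProduct_mulVec.mpr ⟨?_, ?_⟩
  · have : ((c : ℂ) • A)ᴴ = (starRingEnd ℂ) (c : ℂ) • Aᴴ := Matrix.conjTranspose_smul _ _
    rw [Matrix.IsHermitian, this, Complex.conj_ofReal, hA.1.eq]
  · intro x
    rw [Matrix.smul_mulVec, dotProduct_smul, smul_eq_mul]
    exact mul_nonneg (by exact_mod_cast hc) (hA.dotProduct_mulVec_nonneg x)

lemma trace_mul_psd_nonneg {P Q : Matrix d d ℂ} (hP : P.PosSemidef) (hQ : Q.PosSemidef) :
    0 ≤ (P * Q).trace := by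
  have hH := hP.1
  have h2 := hQ.conjTranspose_mul_mul_same (hH.eigenvectorUnitary : Matrix d d ℂ)
  have h1 : (P * Q).trace = (diagonal (RCLike.ofReal ∘ hH.eigenvalues)
      * ((hH.eigenvectorUnitary : Matrix d d ℂ)ᴴ * Q * (hH.eigenvectorUnitary : Matrix d d ℂ))).trace := by
    nth_rewrite 1 [hH.spectral_theorem]
    rw [Unitary.conjStarAlgAut_apply, Matrix.star_eq_conjTranspose]
    simp only [Matrix.mul_assoc]
    rw [Matrix.trace_mul_comm]
    simp only [Matrix.mul_assoc]
  rw [h1]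
  simp only [Matrix.trace, Matrix.diag_apply, Matrix.diagonal_mul]
  refine Finset.sum_nonneg fun i _ => mul_nonneg ?_ (psd_diag_nonneg_s6 h2 i)
  simp only [Function.comp_apply]
  exact Complex.zero_le_real.mpr (hP.eigenvalues_nonneg i)


lemma le_trace_smul_one {A : Matrix d d ℂ} (hA : A.PosSemidef) {c : ℝ}
    (hc : A.trace.re ≤ c) : (((c : ℝ) : ℂ) • 1 - A).PosSemidef := by
  have hH := hA.1
  have hU : (hH.eigenvectorUnitary : Matrix d d ℂ) * star (hH.eigenvectorUnitary : Matrix d d ℂ)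
      = 1 := Matrix.mem_unitaryGroup_iff.mp hH.eigenvectorUnitary.2
  have hU' : star (hH.eigenvectorUnitary : Matrix d d ℂ) * (hH.eigenvectorUnitary : Matrix d d ℂ)
      = 1 := Matrix.mem_unitaryGroup_iff'.mp hH.eigenvectorUnitary.2
  have htr : ∑ i, hH.eigenvalues i = A.trace.re := by
    have h1 : A.trace = ∑ i, (hH.eigenvalues i : ℂ) := by
      nth_rewrite 1 [hH.spectral_theorem]
      rw [Unitary.conjStarAlgAut_apply, Matrix.trace_mul_cycle, hU', one_mul,
        Matrix.trace_diagonal]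
      rfl
    rw [h1, ← Complex.ofReal_sum]
    exact Complex.ofReal_re _
  have hev : ∀ i, 0 ≤ ((c - hH.eigenvalues i : ℝ) : ℂ) := by
    intro i
    rw [Complex.zero_le_real, sub_nonneg]
    calc hH.eigenvalues i ≤ ∑ j, hH.eigenvalues j :=
          Finset.single_le_sum (fun j _ => hA.eigenvalues_nonneg j) (Finset.mem_univ i)
      _ = A.trace.re := htr
      _ ≤ c := hc
  have key : ((c : ℝ) : ℂ) • 1 - A
      = (hH.eigenvectorUnitary : Matrix d d ℂ)
        * (diagonal fun i => ((c - hH.eigenvalues i : ℝ) : ℂ))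
        * star (hH.eigenvectorUnitary : Matrix d d ℂ) := by
    have hdiag : (diagonal fun i => ((c - hH.eigenvalues i : ℝ) : ℂ))
        = ((c : ℝ) : ℂ) • (1 : Matrix d d ℂ) - diagonal (RCLike.ofReal ∘ hH.eigenvalues) := by
      rw [← Matrix.diagonal_one, ← Matrix.diagonal_smul, Matrix.diagonal_sub]
      congr 1
      funext i
      simp [Pi.smul_apply, smul_eq_mul]
    rw [hdiag, Matrix.mul_sub, Matrix.sub_mul]
    congr 1
    · rw [Matrix.mul_smul, mul_one, Matrix.smul_mul, hU]
    · exact hH.spectral_theorem.trans (by rw [Unitary.conjStarAlgAut_apply])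
  rw [key]
  have := (posSemidef_diagonal_iff.mpr hev).mul_mul_conjTranspose_same
    (hH.eigenvectorUnitary : Matrix d d ℂ)
  rwa [← Matrix.star_eq_conjTranspose] at this

lemma smul_effect {A : Matrix d d ℂ} (hA : A.PosSemidef) :
    IsEffect ((((A.trace.re + 1)⁻¹ : ℝ) : ℂ) • A) := by
  have h0 : 0 ≤ A.trace.re := (Complex.nonneg_iff.mp (psd_trace_nonneg_s6 hA)).1
  have hc0 : 0 < A.trace.re + 1 := by linarith
  constructor
  · exact psd_smul hA (inv_nonneg.mpr hc0.le)
  · have h1 : (1 : Matrix d d ℂ) - (((A.trace.re + 1)⁻¹ : ℝ) : ℂ) • A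
        = (((A.trace.re + 1)⁻¹ : ℝ) : ℂ) • ((((A.trace.re + 1 : ℝ)) : ℂ) • 1 - A) := by
      rw [smul_sub, smul_smul, ← Complex.ofReal_mul, inv_mul_cancel₀ hc0.ne',
        Complex.ofReal_one, one_smul]
    rw [h1]
    exact psd_smul (le_trace_smul_one hA (by linarith)) (inv_nonneg.mpr hc0.le)

lemma psd_map_iff_adj {k : Type*} [Fintype k] [DecidableEq k]
    (G G' : Matrix k k ℂ → Matrix k k ℂ)
    (hadj : ∀ A B, (G A * B).trace = (A * G' B).trace) :
    (∀ A, A.PosSemidef → (G A).PosSemidef) ↔ (∀ N, IsEffect N → (G' N).PosSemidef) := by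
  constructor
  · intro hG N hN
    refine psd_of_qform _ fun x => ?_
    rw [← qform_trace, Matrix.trace_mul_comm, ← hadj]
    exact trace_mul_psd_nonneg (hG _ (vecMulVec_psd x)) hN.1
  · intro hG' A hA
    refine psd_of_qform _ fun x => ?_
    rw [← qform_trace]
    have hPpsd := vecMulVec_psd x
    set P := vecMulVec x (star x) with hP
    have hc0 : 0 < P.trace.re + 1 := by
      have h0 := (Complex.nonneg_iff.mp (psd_trace_nonneg_s6 hPpsd)).1
      linarith
    have heff := smul_effect hPpsd
    have key : (G A * P).trace
        = ((P.trace.re + 1 : ℝ) : ℂ) * (G A * ((((P.trace.re + 1)⁻¹ : ℝ) : ℂ) • P)).trace := by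
      rw [Matrix.mul_smul, Matrix.trace_smul, smul_eq_mul, ← mul_assoc,
        ← Complex.ofReal_mul, mul_inv_cancel₀ hc0.ne', Complex.ofReal_one, one_mul]
    rw [key, hadj]
    refine mul_nonneg ?_ (trace_mul_psd_nonneg hA (hG' _ heff))
    rw [Complex.zero_le_real]
    exact hc0.le


section TensorAux

set_option linter.unusedSectionVars false

lemma tensorMap_sub {n : ℕ} (Φ Ψ : Matrix (Fin n) (Fin n) ℂ → Matrix (Fin n) (Fin n) ℂ)
    (m : ℕ) (A : Matrix (Fin m × Fin n) (Fin m × Fin n) ℂ) :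
    tensorMap (Φ - Ψ) m A = tensorMap Φ m A - tensorMap Ψ m A := by
  ext p q
  simp [tensorMap, Pi.sub_apply, Matrix.sub_apply]

lemma tensorMap_smul {n : ℕ} {Φ : Matrix (Fin n) (Fin n) ℂ → Matrix (Fin n) (Fin n) ℂ}
    (hΦ : IsLinearMap ℂ Φ) (m : ℕ) (c : ℂ) (A : Matrix (Fin m × Fin n) (Fin m × Fin n) ℂ) :
    tensorMap Φ m (c • A) = c • tensorMap Φ m A := by
  ext p q
  have h : (Matrix.of fun a b => c • A (p.1, a) (q.1, b))
      = c • (Matrix.of fun a b => A (p.1, a) (q.1, b)) := by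
    ext i j
    simp
  simp only [tensorMap, Matrix.smul_apply]
  rw [h, hΦ.map_smul, Matrix.smul_apply]

lemma tensor_adj {n : ℕ} (Φ Φ' : Matrix (Fin n) (Fin n) ℂ → Matrix (Fin n) (Fin n) ℂ)
    (h : ∀ A B, (Φ A * B).trace = (A * Φ' B).trace) (m : ℕ)
    (A B : Matrix (Fin m × Fin n) (Fin m × Fin n) ℂ) :
    (tensorMap Φ m A * B).trace = (A * tensorMap Φ' m B).trace := by
  have key : ∀ a b : Fin m,
      (Φ (Matrix.of fun i j => A (a, i) (b, j)) * Matrix.of (fun i j => B (b, i) (a, j))).trace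
      = ((Matrix.of fun i j => A (a, i) (b, j)) * Φ' (Matrix.of fun i j => B (b, i) (a, j))).trace :=
    fun a b => h _ _
  calc (tensorMap Φ m A * B).trace
      = ∑ a : Fin m, ∑ b : Fin m, ∑ i : Fin n, ∑ j : Fin n,
          Φ (Matrix.of fun i' j' => A (a, i') (b, j')) i j * B (b, j) (a, i) := by
        simp only [Matrix.trace, Matrix.diag_apply, Matrix.mul_apply,
          Fintype.sum_prod_type, tensorMap]
        refine Finset.sum_congr rfl fun a _ => ?_
        exact Finset.sum_comm
    _ = ∑ a : Fin m, ∑ b : Fin m,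
          (Φ (Matrix.of fun i' j' => A (a, i') (b, j'))
            * Matrix.of fun i j => B (b, i) (a, j)).trace := by
        refine Finset.sum_congr rfl fun a _ => Finset.sum_congr rfl fun b _ => ?_
        simp [Matrix.trace, Matrix.mul_apply]
    _ = ∑ a : Fin m, ∑ b : Fin m,
          ((Matrix.of fun i' j' => A (a, i') (b, j'))
            * Φ' (Matrix.of fun i j => B (b, i) (a, j))).trace :=
        Finset.sum_congr rfl fun a _ => Finset.sum_congr rfl fun b _ => key a b
    _ = ∑ a : Fin m, ∑ b : Fin m, ∑ i : Fin n, ∑ j : Fin n,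
          A (a, i) (b, j) * Φ' (Matrix.of fun i' j' => B (b, i') (a, j')) j i := by
        refine Finset.sum_congr rfl fun a _ => Finset.sum_congr rfl fun b _ => ?_
        simp [Matrix.trace, Matrix.mul_apply]
    _ = (A * tensorMap Φ' m B).trace := by
        simp only [Matrix.trace, Matrix.diag_apply, Matrix.mul_apply,
          Fintype.sum_prod_type, tensorMap]
        refine Finset.sum_congr rfl fun a _ => ?_
        exact Finset.sum_comm.symm

end TensorAux

theorem cp_order_characterizations {n : ℕ}
    (E F E' F' : Matrix (Fin n) (Fin n) ℂ → Matrix (Fin n) (Fin n) ℂ)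
    (hE : IsCPTN E) (hF : IsCPTN F)
    (hE'l : IsLinearMap ℂ E') (hF'l : IsLinearMap ℂ F')
    (hadjE : ∀ A B : Matrix (Fin n) (Fin n) ℂ, (E A * B).trace = (A * E' B).trace)
    (hadjF : ∀ A B : Matrix (Fin n) (Fin n) ℂ, (F A * B).trace = (A * F' B).trace) :
    (IsCP (F - E) ↔
      ∀ (m : ℕ) (A : Matrix (Fin m × Fin n) (Fin m × Fin n) ℂ),
        A.PosSemidef → Loewner A 1 →
          Loewner (tensorMap E m A) (tensorMap F m A)) ∧
    (IsCP (F - E) ↔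
      ∀ (m : ℕ) (N : Matrix (Fin m × Fin n) (Fin m × Fin n) ℂ),
        IsEffect N → Loewner (tensorMap E' m N) (tensorMap F' m N)) := by
  have hD : ∀ A B : Matrix (Fin n) (Fin n) ℂ,
      ((F - E) A * B).trace = (A * (F' - E') B).trace := by
    intro A B
    simp only [Pi.sub_apply, Matrix.sub_mul, Matrix.mul_sub, Matrix.trace_sub,
      hadjE A B, hadjF A B]
  have hDadj : ∀ (m : ℕ) (A B : Matrix (Fin m × Fin n) (Fin m × Fin n) ℂ),
      (tensorMap (F - E) m A * B).trace
        = (A * (tensorMap F' m B - tensorMap E' m B)).trace := by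
    intro m A B
    rw [tensor_adj (F - E) (F' - E') hD m A B, tensorMap_sub]
  constructor
  · constructor
    · intro hcp m A hA _
      have h1 := hcp m A hA
      rw [tensorMap_sub] at h1
      exact h1
    · intro hmono m A hA
      show (tensorMap (F - E) m A).PosSemidef
      rw [tensorMap_sub]
      have h0 : 0 ≤ A.trace.re := (Complex.nonneg_iff.mp (psd_trace_nonneg_s6 hA)).1
      have hc0 : 0 < A.trace.re + 1 := by linarith
      have heff := smul_effect hA
      have h1 : (tensorMap F m ((((A.trace.re + 1)⁻¹ : ℝ) : ℂ) • A)
          - tensorMap E m ((((A.trace.re + 1)⁻¹ : ℝ) : ℂ) • A)).PosSemidef :=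
        hmono m _ heff.1 heff.2
      rw [tensorMap_smul hE.1, tensorMap_smul hF.1, ← smul_sub] at h1
      have h2 := psd_smul h1 hc0.le
      rwa [smul_smul, ← Complex.ofReal_mul, mul_inv_cancel₀ hc0.ne', Complex.ofReal_one,
        one_smul] at h2
  · constructor
    · intro hcp m N hN
      show (tensorMap F' m N - tensorMap E' m N).PosSemidef
      exact (psd_map_iff_adj (tensorMap (F - E) m)
        (fun B => tensorMap F' m B - tensorMap E' m B) (hDadj m)).mp
        (fun A hA => hcp m A hA) N hN
    · intro hmono m A hA
      exact (psd_map_iff_adj (tensorMap (F - E) m)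
        (fun B => tensorMap F' m B - tensorMap E' m B) (hDadj m)).mpr
        (fun N hN => hmono m N hN) A hA
end
end

section
/- Define, for CPTN super-operators E, F on L(H_V): E ≤_T^e F iff for all effects M, N (on any extension system), M ⊑ E†(N) implies M ⊑ F†(N) (where G†(N) is extended by tensoring with identity). Then E ≤_T^e F if and only if F − E is completely positive. -/
open Matrix
open scoped ComplexOrder

noncomputable section

set_option linter.unusedSectionVars false
namespace CPTNaux
variable {d : Type*} [Fintype d] [DecidableEq d]

/-- outer product `v vᴴ` -/
def outer (v : d → ℂ) : Matrix d d ℂ := Matrix.of fun i j => v i * star (v j)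

lemma outer_mulVec (v w : d → ℂ) : outer v *ᵥ w = fun i => v i * (star v ⬝ᵥ w) := by
  funext i
  simp [outer, mulVec, dotProduct, Finset.mul_sum]
  exact Finset.sum_congr rfl fun j _ => by ring

lemma outer_quad (v w : d → ℂ) :
    star w ⬝ᵥ outer v *ᵥ w = star (star v ⬝ᵥ w) * (star v ⬝ᵥ w) := by
  rw [outer_mulVec]
  simp [dotProduct, Finset.sum_mul, star_sum]
  exact Finset.sum_congr rfl fun j _ => by ring

lemma outer_posSemidef (v : d → ℂ) : (outer v).PosSemidef := by
  refine posSemidef_iff_dotProduct_mulVec.mpr ⟨?_, ?_⟩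
  · ext i j; simp [outer, conjTranspose]; ring
  · intro w
    rw [outer_quad]
    exact star_mul_self_nonneg _

lemma trace_mul_outer (X : Matrix d d ℂ) (v : d → ℂ) :
    (X * outer v).trace = star v ⬝ᵥ X *ᵥ v := by
  simp [Matrix.trace, Matrix.diag, Matrix.mul_apply, outer, dotProduct, mulVec,
    Finset.mul_sum]
  exact Finset.sum_congr rfl fun i _ => Finset.sum_congr rfl fun j _ => by ring

lemma psd_of_quadform {X : Matrix d d ℂ} (h : ∀ v : d → ℂ, 0 ≤ star v ⬝ᵥ X *ᵥ v) :
    X.PosSemidef := by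
  refine PosSemidef.of_dotProduct_mulVec_nonneg ?_ h
  rw [Matrix.isHermitian_iff_isSymmetric, LinearMap.isSymmetric_iff_inner_map_self_real]
  intro v
  obtain ⟨w, rfl⟩ := (WithLp.equiv 2 (d → ℂ)).symm.surjective v
  rw [WithLp.equiv_symm_apply, toEuclideanLin_apply_piLp_toLp, EuclideanSpace.inner_toLp_toLp,
    dotProduct_comm, ← Matrix.toLin'_apply]
  have h3 : (starRingEnd ℂ) (star w ⬝ᵥ X *ᵥ w) = star w ⬝ᵥ X *ᵥ w :=
    Complex.conj_eq_iff_im.mpr (Complex.nonneg_iff.mp (h w)).2.symm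
  have h1 : star (Matrix.toLin' X w) ⬝ᵥ w = star w ⬝ᵥ X *ᵥ w := by
    have h0 : star (Matrix.toLin' X w) ⬝ᵥ w = (starRingEnd ℂ) (star w ⬝ᵥ X *ᵥ w) := by
      simp [dotProduct, Matrix.mulVec, Matrix.toLin'_apply, map_sum, _root_.map_mul,
        Finset.mul_sum, Finset.sum_mul]
      exact Finset.sum_congr rfl fun i _ => Finset.sum_congr rfl fun j _ => by ring
    rw [h0, h3]
  rw [h1, h3]

lemma trace_nonneg_of_psd {X : Matrix d d ℂ} (h : X.PosSemidef) : 0 ≤ X.trace := by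
  rw [Matrix.trace]
  refine Finset.sum_nonneg fun i _ => ?_
  have := h.dotProduct_mulVec_nonneg (Pi.single i 1)
  simpa [Matrix.mulVec_single, dotProduct, Pi.single_apply] using this

lemma trace_mul_psd_nonneg {A B : Matrix d d ℂ} (hA : A.PosSemidef) (hB : B.PosSemidef) :
    0 ≤ (A * B).trace := by
  obtain ⟨C, rfl⟩ : ∃ C : Matrix d d ℂ, A = Cᴴ * C := by
    open scoped MatrixOrder in
    exact CStarAlgebra.nonneg_iff_eq_star_mul_self.mp hA.nonneg
  have h1 : (Cᴴ * C * B).trace = (C * B * Cᴴ).trace := (Matrix.trace_mul_cycle C B Cᴴ).symm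
  rw [h1]
  exact trace_nonneg_of_psd (hB.mul_mul_conjTranspose_same C)



/-- block extraction -/
def blk {m n : ℕ} (A : Matrix (Fin m × Fin n) (Fin m × Fin n) ℂ) (a b : Fin m) :
    Matrix (Fin n) (Fin n) ℂ := Matrix.of fun i j => A (a, i) (b, j)

lemma trace_tensor_mul {n : ℕ} (Φ : Matrix (Fin n) (Fin n) ℂ → Matrix (Fin n) (Fin n) ℂ)
    (m : ℕ) (A B : Matrix (Fin m × Fin n) (Fin m × Fin n) ℂ) :
    (tensorMap Φ m A * B).trace =
      ∑ a : Fin m, ∑ b : Fin m, (Φ (blk A a b) * blk B b a).trace := by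
  simp [Matrix.trace, Matrix.diag, Matrix.mul_apply, tensorMap, blk, Fintype.sum_prod_type]
  exact Finset.sum_congr rfl fun a _ => Finset.sum_comm

lemma tensor_adjoint {n : ℕ} {Φ Φ' : Matrix (Fin n) (Fin n) ℂ → Matrix (Fin n) (Fin n) ℂ}
    (hadj : ∀ A B : Matrix (Fin n) (Fin n) ℂ, (Φ A * B).trace = (A * Φ' B).trace)
    (m : ℕ) (A B : Matrix (Fin m × Fin n) (Fin m × Fin n) ℂ) :
    (tensorMap Φ m A * B).trace = (A * tensorMap Φ' m B).trace := by
  rw [trace_tensor_mul, Matrix.trace_mul_comm, trace_tensor_mul, Finset.sum_comm]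
  exact Finset.sum_congr rfl fun a _ => Finset.sum_congr rfl fun b _ => by
    rw [hadj, Matrix.trace_mul_comm]

lemma tensor_adj_psd {n : ℕ} {Φ Φ' : Matrix (Fin n) (Fin n) ℂ → Matrix (Fin n) (Fin n) ℂ}
    (hcp : IsCP Φ)
    (hadj : ∀ A B : Matrix (Fin n) (Fin n) ℂ, (Φ A * B).trace = (A * Φ' B).trace)
    (m : ℕ) {N : Matrix (Fin m × Fin n) (Fin m × Fin n) ℂ} (hN : N.PosSemidef) :
    (tensorMap Φ' m N).PosSemidef := by
  apply psd_of_quadform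
  intro v
  rw [← trace_mul_outer, Matrix.trace_mul_comm, ← tensor_adjoint hadj]
  exact trace_mul_psd_nonneg (hcp m (outer v) (outer_posSemidef v)) hN


lemma cp_pos {n : ℕ} {Φ : Matrix (Fin n) (Fin n) ℂ → Matrix (Fin n) (Fin n) ℂ}
    (hcp : IsCP Φ) {A : Matrix (Fin n) (Fin n) ℂ} (hA : A.PosSemidef) :
    (Φ A).PosSemidef := by
  have hA' : (A.submatrix (Prod.snd : Fin 1 × Fin n → Fin n) Prod.snd).PosSemidef :=
    hA.submatrix _
  have h := (hcp 1 _ hA').submatrix (fun i : Fin n => ((0 : Fin 1), i))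
  have e : Φ A = (tensorMap Φ 1 (A.submatrix Prod.snd Prod.snd)).submatrix
      (fun i : Fin n => ((0 : Fin 1), i)) (fun i : Fin n => ((0 : Fin 1), i)) := rfl
  rw [e]
  exact h

lemma one_sub_adj_one {n : ℕ} {Φ Φ' : Matrix (Fin n) (Fin n) ℂ → Matrix (Fin n) (Fin n) ℂ}
    (hcp : IsCP Φ) (htni : IsTNI Φ)
    (hadj : ∀ A B : Matrix (Fin n) (Fin n) ℂ, (Φ A * B).trace = (A * Φ' B).trace) :
    ((1 : Matrix (Fin n) (Fin n) ℂ) - Φ' 1).PosSemidef := by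
  apply psd_of_quadform
  intro v
  rw [← trace_mul_outer, Matrix.sub_mul, Matrix.one_mul, Matrix.trace_sub]
  have h1 : (Φ' 1 * outer v).trace = (Φ (outer v)).trace := by
    rw [Matrix.trace_mul_comm, ← hadj, Matrix.mul_one]
  rw [h1]
  have hps := outer_posSemidef v
  have h2 : 0 ≤ (outer v).trace := trace_nonneg_of_psd hps
  have h3 : 0 ≤ (Φ (outer v)).trace := trace_nonneg_of_psd (cp_pos hcp hps)
  have h4 := htni (outer v) hps
  rw [Complex.nonneg_iff] at h2 h3 ⊢
  refine ⟨by simp [Complex.sub_re]; linarith, by simp [Complex.sub_im, ← h2.2, ← h3.2]⟩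

lemma blockdiag_psd {m n : ℕ} {X : Matrix (Fin n) (Fin n) ℂ} (hX : X.PosSemidef) :
    (Matrix.of fun (p q : Fin m × Fin n) => if p.1 = q.1 then X p.2 q.2 else 0).PosSemidef := by
  apply psd_of_quadform
  intro v
  have key : star v ⬝ᵥ (Matrix.of fun (p q : Fin m × Fin n) =>
        if p.1 = q.1 then X p.2 q.2 else 0) *ᵥ v
      = ∑ a : Fin m, star (fun i => v (a, i)) ⬝ᵥ X *ᵥ (fun i => v (a, i)) := by
    simp [dotProduct, Matrix.mulVec, Fintype.sum_prod_type, Finset.mul_sum, ite_mul]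
  rw [key]
  exact Finset.sum_nonneg fun a _ => hX.dotProduct_mulVec_nonneg _

lemma tensor_one_eq {n : ℕ} {Φ' : Matrix (Fin n) (Fin n) ℂ → Matrix (Fin n) (Fin n) ℂ}
    (hlin : IsLinearMap ℂ Φ') (m : ℕ) :
    tensorMap Φ' m 1 =
      Matrix.of fun p q => if p.1 = q.1 then Φ' 1 p.2 q.2 else 0 := by
  ext ⟨a, i⟩ ⟨b, j⟩
  by_cases hab : a = b
  · subst hab
    have h1 : (Matrix.of fun x y =>
        (1 : Matrix (Fin m × Fin n) (Fin m × Fin n) ℂ) (a, x) (a, y)) = 1 := by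
      ext x y; simp [Matrix.one_apply, Prod.ext_iff]
    show Φ' (Matrix.of fun x y =>
        (1 : Matrix (Fin m × Fin n) (Fin m × Fin n) ℂ) (a, x) (a, y)) i j = _
    rw [h1]; simp
  · have h0 : (Matrix.of fun x y =>
        (1 : Matrix (Fin m × Fin n) (Fin m × Fin n) ℂ) (a, x) (b, y)) = 0 := by
      ext x y; simp [Matrix.one_apply, Prod.ext_iff, hab]
    show Φ' (Matrix.of fun x y =>
        (1 : Matrix (Fin m × Fin n) (Fin m × Fin n) ℂ) (a, x) (b, y)) i j = _
    rw [h0, hlin.map_zero]; simp [hab]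

lemma tensor_sub {n : ℕ} {Φ' : Matrix (Fin n) (Fin n) ℂ → Matrix (Fin n) (Fin n) ℂ}
    (hlin : IsLinearMap ℂ Φ') (m : ℕ)
    (X Y : Matrix (Fin m × Fin n) (Fin m × Fin n) ℂ) :
    tensorMap Φ' m (X - Y) = tensorMap Φ' m X - tensorMap Φ' m Y := by
  ext p q
  have h : (Matrix.of fun a b => (X - Y) (p.1, a) (q.1, b))
      = (Matrix.of fun a b => X (p.1, a) (q.1, b)) - Matrix.of fun a b => Y (p.1, a) (q.1, b) := by
    ext a b; simp [Matrix.sub_apply]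
  show Φ' (Matrix.of fun a b => (X - Y) (p.1, a) (q.1, b)) p.2 q.2 = _
  rw [h, hlin.map_sub]
  rfl

lemma tensor_effect {n : ℕ} {Φ Φ' : Matrix (Fin n) (Fin n) ℂ → Matrix (Fin n) (Fin n) ℂ}
    (hcp : IsCP Φ) (htni : IsTNI Φ) (hlin' : IsLinearMap ℂ Φ')
    (hadj : ∀ A B : Matrix (Fin n) (Fin n) ℂ, (Φ A * B).trace = (A * Φ' B).trace)
    (m : ℕ) {N : Matrix (Fin m × Fin n) (Fin m × Fin n) ℂ}
    (hN : N.PosSemidef) (hN1 : (1 - N).PosSemidef) :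
    (tensorMap Φ' m N).PosSemidef ∧ (1 - tensorMap Φ' m N).PosSemidef := by
  refine ⟨tensor_adj_psd hcp hadj m hN, ?_⟩
  have key : (1 : Matrix (Fin m × Fin n) (Fin m × Fin n) ℂ) - tensorMap Φ' m N
      = ((1 : Matrix (Fin m × Fin n) (Fin m × Fin n) ℂ) - tensorMap Φ' m 1)
        + tensorMap Φ' m (1 - N) := by
    rw [tensor_sub hlin']
    exact (sub_add_sub_cancel _ _ _).symm
  rw [key]
  refine Matrix.PosSemidef.add ?_ (tensor_adj_psd hcp hadj m hN1)
  have e : (1 : Matrix (Fin m × Fin n) (Fin m × Fin n) ℂ) - tensorMap Φ' m 1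
      = Matrix.of fun p q =>
          if p.1 = q.1 then ((1 : Matrix (Fin n) (Fin n) ℂ) - Φ' 1) p.2 q.2 else 0 := by
    rw [tensor_one_eq hlin']
    ext ⟨a, i⟩ ⟨b, j⟩
    by_cases hab : a = b <;>
      simp [Matrix.one_apply, Matrix.sub_apply, Prod.ext_iff, hab]
  rw [e]
  exact blockdiag_psd (one_sub_adj_one hcp htni hadj)

lemma smul_outer_psd {d : Type*} [Fintype d] [DecidableEq d] {c : ℝ} (hc : 0 ≤ c) (v : d → ℂ) :
    ((c : ℂ) • outer v).PosSemidef := by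
  apply psd_of_quadform
  intro w
  rw [Matrix.smul_mulVec, dotProduct_smul, outer_quad, smul_eq_mul]
  exact mul_nonneg (Complex.zero_le_real.mpr hc) (star_mul_self_nonneg _)

lemma one_sub_smul_outer_psd {d : Type*} [Fintype d] [DecidableEq d] (v : d → ℂ) :
    ((1 : Matrix d d ℂ) -
      (((1 + ‖(WithLp.equiv 2 (d → ℂ)).symm v‖ ^ 2)⁻¹ : ℝ) : ℂ) • outer v).PosSemidef := by
  set v' := (WithLp.equiv 2 (d → ℂ)).symm v with hv'
  set c : ℝ := (1 + ‖v'‖ ^ 2)⁻¹ with hc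
  apply psd_of_quadform
  intro w
  set w' := (WithLp.equiv 2 (d → ℂ)).symm w with hw'
  have hz : star v ⬝ᵥ w = (inner ℂ v' w' : ℂ) := by
    rw [hv', hw', WithLp.equiv_symm_apply, EuclideanSpace.inner_toLp_toLp, dotProduct_comm]
  have hwq : star w ⬝ᵥ w = ((‖w'‖ ^ 2 : ℝ) : ℂ) := by
    rw [show star w ⬝ᵥ w = (inner ℂ w' w' : ℂ) by
        rw [hw', WithLp.equiv_symm_apply, EuclideanSpace.inner_toLp_toLp, dotProduct_comm],
      inner_self_eq_norm_sq_to_K, Complex.ofReal_pow]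
    rfl
  rw [Matrix.sub_mulVec, Matrix.one_mulVec, dotProduct_sub, Matrix.smul_mulVec,
    dotProduct_smul, outer_quad, smul_eq_mul, hwq, hz]
  set z : ℂ := (inner ℂ v' w' : ℂ) with hzz
  have hzsq : star z * z = ((‖z‖ ^ 2 : ℝ) : ℂ) := by
    rw [Complex.star_def, ← Complex.normSq_eq_conj_mul_self, Complex.normSq_eq_norm_sq]
  rw [hzsq]
  have : ((‖w'‖ ^ 2 : ℝ) : ℂ) - (c : ℂ) * ((‖z‖ ^ 2 : ℝ) : ℂ)
      = ((‖w'‖ ^ 2 - c * ‖z‖ ^ 2 : ℝ) : ℂ) := by push_cast; ring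
  rw [this]
  apply Complex.zero_le_real.mpr
  have hcs : ‖z‖ ≤ ‖v'‖ * ‖w'‖ := norm_inner_le_norm v' w'
  have hpos : (0 : ℝ) < 1 + ‖v'‖ ^ 2 := by positivity
  have hc1 : c * (1 + ‖v'‖ ^ 2) = 1 := inv_mul_cancel₀ hpos.ne'
  have hc0 : 0 ≤ c := by positivity
  nlinarith [norm_nonneg z, norm_nonneg v', norm_nonneg w', sq_nonneg (‖v'‖ * ‖w'‖)]

end CPTNaux


theorem total_refinement_iff_cp {n : ℕ}
    (E F E' F' : Matrix (Fin n) (Fin n) ℂ → Matrix (Fin n) (Fin n) ℂ)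
    (hE : IsCPTN E) (hF : IsCPTN F)
    (hE'l : IsLinearMap ℂ E') (hF'l : IsLinearMap ℂ F')
    (hadjE : ∀ A B : Matrix (Fin n) (Fin n) ℂ, (E A * B).trace = (A * E' B).trace)
    (hadjF : ∀ A B : Matrix (Fin n) (Fin n) ℂ, (F A * B).trace = (A * F' B).trace) :
    (∀ (m : ℕ) (M N : Matrix (Fin m × Fin n) (Fin m × Fin n) ℂ),
        IsEffect M → IsEffect N →
        Loewner M (tensorMap E' m N) → Loewner M (tensorMap F' m N)) ↔
      IsCP (F - E) := by
  obtain ⟨hEl, hEcp, hEtni⟩ := hE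
  obtain ⟨hFl, hFcp, hFtni⟩ := hF
  constructor
  · intro href m A hA
    have hFE : tensorMap (F - E) m A = tensorMap F m A - tensorMap E m A := rfl
    rw [hFE]
    apply CPTNaux.psd_of_quadform
    intro v
    set v' := (WithLp.equiv 2 (Fin m × Fin n → ℂ)).symm v with hv'
    set c : ℝ := (1 + ‖v'‖ ^ 2)⁻¹ with hc
    have hcpos : 0 < c := by positivity
    set N := (c : ℂ) • CPTNaux.outer v with hNdef
    have hNpsd : N.PosSemidef := CPTNaux.smul_outer_psd hcpos.le v
    have hN1 : ((1 : Matrix (Fin m × Fin n) (Fin m × Fin n) ℂ) - N).PosSemidef :=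
      CPTNaux.one_sub_smul_outer_psd v
    have hM := CPTNaux.tensor_effect hEcp hEtni hE'l hadjE m hNpsd hN1
    have hL0 : Loewner (tensorMap E' m N) (tensorMap E' m N) := by
      unfold Loewner; rw [sub_self]; exact Matrix.PosSemidef.zero
    have hL := href m (tensorMap E' m N) N ⟨hM.1, hM.2⟩ ⟨hNpsd, hN1⟩ hL0
    unfold Loewner at hL
    have h0 : 0 ≤ (A * (tensorMap F' m N - tensorMap E' m N)).trace :=
      CPTNaux.trace_mul_psd_nonneg hA hL
    rw [Matrix.mul_sub, Matrix.trace_sub, ← CPTNaux.tensor_adjoint hadjF,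
      ← CPTNaux.tensor_adjoint hadjE] at h0
    have e1 : ∀ X : Matrix (Fin m × Fin n) (Fin m × Fin n) ℂ,
        (X * N).trace = (c : ℂ) * (star v ⬝ᵥ X *ᵥ v) := by
      intro X
      rw [hNdef, Matrix.mul_smul, Matrix.trace_smul, CPTNaux.trace_mul_outer, smul_eq_mul]
    rw [e1, e1] at h0
    have h1 : 0 ≤ (c : ℂ) *
        (star v ⬝ᵥ tensorMap F m A *ᵥ v - star v ⬝ᵥ tensorMap E m A *ᵥ v) := by
      rw [mul_sub]; exact h0
    have hcne : (c : ℂ) ≠ 0 := by exact_mod_cast hcpos.ne'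
    have hinv : (0 : ℂ) ≤ ((c : ℂ))⁻¹ := by
      rw [← Complex.ofReal_inv]
      exact Complex.zero_le_real.mpr (by positivity)
    have h2 := mul_nonneg hinv h1
    rw [← mul_assoc, inv_mul_cancel₀ hcne, one_mul] at h2
    rw [Matrix.sub_mulVec, dotProduct_sub]
    exact h2
  · intro hcp m M N hMeff hNeff hMN
    unfold Loewner at hMN ⊢
    have hadjFE : ∀ A B : Matrix (Fin n) (Fin n) ℂ,
        ((F - E) A * B).trace = (A * (F' B - E' B)).trace := by
      intro A B
      have h1 : (F - E) A = F A - E A := rfl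
      rw [h1, Matrix.sub_mul, Matrix.trace_sub, hadjF, hadjE, ← Matrix.trace_sub,
        ← Matrix.mul_sub]
    have hD : (tensorMap (fun B => F' B - E' B) m N).PosSemidef :=
      CPTNaux.tensor_adj_psd hcp hadjFE m hNeff.1
    have e : tensorMap (fun B => F' B - E' B) m N
        = tensorMap F' m N - tensorMap E' m N := rfl
    rw [e] at hD
    have hsplit : tensorMap F' m N - M
        = (tensorMap F' m N - tensorMap E' m N) + (tensorMap E' m N - M) :=
      (sub_add_sub_cancel _ _ _).symm
    rw [hsplit]
    exact hD.add hMN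
end
end

section
/- If {E_i : i ∈ K} and {F_j : j ∈ J} are two Kraus representations of the same completely positive super-operator on L(H) (H finite-dimensional), i.e., Σ_i E_i A E_i† = Σ_j F_j A F_j† for all A, then span{E_i : i ∈ K} = span{F_j : j ∈ J}. -/
open Matrix
open scoped ComplexOrder

noncomputable section

open scoped InnerProductSpace ComplexConjugate in
private lemma krausAux_mem_orth_span_range_iff {ι : Type*} [Fintype ι] {d : Type*} [Fintype d]
    (v : ι → EuclideanSpace ℂ d) (x : EuclideanSpace ℂ d) :
    x ∈ (Submodule.span ℂ (Set.range v))ᗮ ↔ ∀ i, ⟪v i, x⟫_ℂ = 0 := by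
  constructor
  · intro hx i
    exact hx (v i) (Submodule.subset_span (Set.mem_range_self i))
  · intro hx u hu
    induction hu using Submodule.span_induction with
    | mem u hu => obtain ⟨i, rfl⟩ := hu; exact hx i
    | zero => simp
    | add a b _ _ ha hb => rw [inner_add_left, ha, hb, add_zero]
    | smul c a _ ha => rw [inner_smul_left, ha, mul_zero]

open scoped InnerProductSpace ComplexConjugate in
private lemma krausAux_span_eq_of_sum_normSq {ι κ : Type*} [Fintype ι] [Fintype κ]
    {d : Type*} [Fintype d]
    (v : ι → EuclideanSpace ℂ d) (w : κ → EuclideanSpace ℂ d)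
    (h : ∀ x : EuclideanSpace ℂ d,
      ∑ i, Complex.normSq ⟪v i, x⟫_ℂ = ∑ j, Complex.normSq ⟪w j, x⟫_ℂ) :
    Submodule.span ℂ (Set.range v) = Submodule.span ℂ (Set.range w) := by
  have horth : (Submodule.span ℂ (Set.range v))ᗮ = (Submodule.span ℂ (Set.range w))ᗮ := by
    ext x
    rw [krausAux_mem_orth_span_range_iff, krausAux_mem_orth_span_range_iff]
    constructor
    · intro hx j
      have h0 : ∑ j, Complex.normSq ⟪w j, x⟫_ℂ = 0 := by
        rw [← h x]; exact Finset.sum_eq_zero fun i _ => by rw [hx i]; simp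
      exact Complex.normSq_eq_zero.mp
        ((Finset.sum_eq_zero_iff_of_nonneg (fun i _ => Complex.normSq_nonneg _)).mp h0 j
          (Finset.mem_univ j))
    · intro hx i
      have h0 : ∑ i, Complex.normSq ⟪v i, x⟫_ℂ = 0 := by
        rw [h x]; exact Finset.sum_eq_zero fun j _ => by rw [hx j]; simp
      exact Complex.normSq_eq_zero.mp
        ((Finset.sum_eq_zero_iff_of_nonneg (fun i _ => Complex.normSq_nonneg _)).mp h0 i
          (Finset.mem_univ i))
  calc Submodule.span ℂ (Set.range v) = (Submodule.span ℂ (Set.range v))ᗮᗮ :=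
        (Submodule.orthogonal_orthogonal _).symm
    _ = (Submodule.span ℂ (Set.range w))ᗮᗮ := by rw [horth]
    _ = Submodule.span ℂ (Set.range w) := Submodule.orthogonal_orthogonal _

open scoped ComplexConjugate in
private lemma krausAux_expand_outer {α d : Type*} [Fintype α] [Fintype d]
    (x : d → ℂ) (u : α → d → ℂ) :
    ∑ i, (∑ p, conj (u i p) * x p) * (∑ q, u i q * conj (x q)) =
    ∑ p, ∑ q, (x p * conj (x q)) * ∑ i, u i q * conj (u i p) := by
  simp_rw [Finset.sum_mul_sum, Finset.mul_sum]
  rw [Finset.sum_comm]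
  refine Finset.sum_congr rfl fun p _ => ?_
  rw [Finset.sum_comm]
  refine Finset.sum_congr rfl fun q _ => ?_
  exact Finset.sum_congr rfl fun i _ => by ring

open scoped ComplexConjugate in
private lemma krausAux_outer_sum_eq {ι κ d : Type*} [Fintype ι] [Fintype κ] [Fintype d]
    (v : ι → d → ℂ) (w : κ → d → ℂ)
    (key : ∀ p q, ∑ i, v i p * conj (v i q) = ∑ j, w j p * conj (w j q))
    (x : d → ℂ) :
    ∑ i, (∑ p, conj (v i p) * x p) * (∑ q, v i q * conj (x q)) =
    ∑ j, (∑ p, conj (w j p) * x p) * (∑ q, w j q * conj (x q)) := by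
  refine (krausAux_expand_outer x v).trans (Eq.trans ?_ (krausAux_expand_outer x w).symm)
  refine Finset.sum_congr rfl fun p _ => Finset.sum_congr rfl fun q _ => ?_
  rw [key]

/-- Vectorization of a matrix as a Euclidean vector. -/
private def krausVecE (n : ℕ) : Matrix (Fin n) (Fin n) ℂ ≃ₗ[ℂ] EuclideanSpace ℂ (Fin n × Fin n) :=
  (LinearEquiv.curry ℂ ℂ (Fin n) (Fin n)).symm ≪≫ₗ
    (WithLp.linearEquiv 2 ℂ ((Fin n × Fin n) → ℂ)).symm

open scoped InnerProductSpace ComplexConjugate in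
private lemma krausVecE_inner {n : ℕ} (M : Matrix (Fin n) (Fin n) ℂ)
    (x : EuclideanSpace ℂ (Fin n × Fin n)) :
    ⟪krausVecE n M, x⟫_ℂ = ∑ pq : Fin n × Fin n, conj (M pq.1 pq.2) * x pq := by
  simp only [PiLp.inner_apply, RCLike.inner_apply]
  exact Finset.sum_congr rfl fun pq _ => by rw [mul_comm]; rfl

open scoped InnerProductSpace ComplexConjugate in
theorem kraus_span_well_defined {n : ℕ} {ι κ : Type*} [Fintype ι] [Fintype κ]
    (Es : ι → Matrix (Fin n) (Fin n) ℂ) (Fs : κ → Matrix (Fin n) (Fin n) ℂ)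
    (h : ∀ A : Matrix (Fin n) (Fin n) ℂ,
      ∑ i, Es i * A * (Es i)ᴴ = ∑ j, Fs j * A * (Fs j)ᴴ) :
    Submodule.span ℂ (Set.range Es) = Submodule.span ℂ (Set.range Fs) := by
  -- entrywise form of the hypothesis (Choi matrix equality)
  have key : ∀ (p a q b : Fin n),
      ∑ i, Es i p a * conj (Es i q b) = ∑ j, Fs j p a * conj (Fs j q b) := by
    intro p a q b
    have := congrFun (congrFun (h (Matrix.single a b 1)) p) q
    simpa [Matrix.sum_apply, Matrix.mul_apply, Matrix.conjTranspose_apply,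
      Matrix.single, Matrix.of_apply, Finset.sum_ite_eq, ite_and,
      Finset.mul_sum] using this
  set e := krausVecE n with he
  have hreal : ∀ x : EuclideanSpace ℂ (Fin n × Fin n),
      ∑ i, Complex.normSq ⟪e (Es i), x⟫_ℂ = ∑ j, Complex.normSq ⟪e (Fs j), x⟫_ℂ := by
    intro x
    have hC : ∑ i, (Complex.normSq ⟪e (Es i), x⟫_ℂ : ℂ)
        = ∑ j, (Complex.normSq ⟪e (Fs j), x⟫_ℂ : ℂ) := by
      simp_rw [← Complex.mul_conj, he, krausVecE_inner, map_sum, _root_.map_mul,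
        Complex.conj_conj]
      exact krausAux_outer_sum_eq (d := Fin n × Fin n)
        (fun i pq => Es i pq.1 pq.2) (fun j pq => Fs j pq.1 pq.2)
        (fun p q => key p.1 p.2 q.1 q.2) (fun pq => x pq)
    exact_mod_cast hC
  have hspan := krausAux_span_eq_of_sum_normSq (fun i => e (Es i)) (fun j => e (Fs j)) hreal
  have hmapE : Submodule.map (e : Matrix (Fin n) (Fin n) ℂ →ₗ[ℂ] _)
      (Submodule.span ℂ (Set.range Es)) = Submodule.span ℂ (Set.range fun i => e (Es i)) := by
    rw [Submodule.map_span, ← Set.range_comp]; rfl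
  have hmapF : Submodule.map (e : Matrix (Fin n) (Fin n) ℂ →ₗ[ℂ] _)
      (Submodule.span ℂ (Set.range Fs)) = Submodule.span ℂ (Set.range fun j => e (Fs j)) := by
    rw [Submodule.map_span, ← Set.range_comp]; rfl
  refine Submodule.map_injective_of_injective (f := (e : Matrix (Fin n) (Fin n) ℂ →ₗ[ℂ] _))
    (by exact e.injective) ?_
  rw [hmapE, hmapF]
  exact hspan
end
end

section
/- Let E be a CPTN super-operator on L(H). The maps wlp(Q) = ker(E†(Q⊥)) and sp(P) = supp(E(P)) on projectors form a Galois connection: for all projectors P, Q, P ⊑ wlp(Q) if and only if sp(P) ⊑ Q. Consequently sp(wlp(Q)) ⊑ Q and P ⊑ wlp(sp(P)). -/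
open Matrix
open scoped ComplexOrder

noncomputable section

namespace WlpAux

variable {n : ℕ}

open scoped MatrixOrder in
def psqrt (A : Matrix (Fin n) (Fin n) ℂ) : Matrix (Fin n) (Fin n) ℂ := CFC.sqrt A

open scoped MatrixOrder in
lemma psqrt_mul_self {A : Matrix (Fin n) (Fin n) ℂ} (hA : A.PosSemidef) :
    psqrt A * psqrt A = A :=
  CFC.sqrt_mul_sqrt_self A (Matrix.nonneg_iff_posSemidef.mpr hA)

open scoped MatrixOrder in
lemma psqrt_psd (A : Matrix (Fin n) (Fin n) ℂ) : (psqrt A).PosSemidef :=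
  Matrix.nonneg_iff_posSemidef.mp (CFC.sqrt_nonneg A)

lemma psd_trace_nonneg {A : Matrix (Fin n) (Fin n) ℂ} (hA : A.PosSemidef) :
    0 ≤ A.trace := by
  rw [Matrix.trace]
  apply Finset.sum_nonneg
  intro j _
  have h := hA.dotProduct_mulVec_nonneg (Pi.single j 1)
  simpa [Matrix.mulVec, dotProduct, Pi.single_apply, Finset.sum_ite_eq,
    Matrix.diag] using h

lemma trace_mul_psd_nonneg {A B : Matrix (Fin n) (Fin n) ℂ}
    (hA : A.PosSemidef) (hB : B.PosSemidef) : 0 ≤ (A * B).trace := by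
  have h1 : A * B = psqrt A * psqrt A * B := by rw [psqrt_mul_self hA]
  have h2 : (psqrt A * psqrt A * B).trace = (psqrt A * B * psqrt A).trace :=
    (Matrix.trace_mul_cycle (psqrt A) B (psqrt A)).symm
  have h3 : (psqrt A * B * psqrt A).PosSemidef := by
    have := hB.mul_mul_conjTranspose_same (psqrt A)
    rwa [(psqrt_psd A).1.eq] at this
  rw [h1, h2]
  exact psd_trace_nonneg h3

lemma eq_zero_of_trace_conjTranspose_mul_self {A : Matrix (Fin n) (Fin n) ℂ}
    (h : (Aᴴ * A).trace = 0) : A = 0 := by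
  have hdiag : ∀ j, (Aᴴ * A) j j = dotProduct (star (fun i => A i j)) (fun i => A i j) := by
    intro j
    simp [Matrix.mul_apply, dotProduct]
  have hnn : ∀ j ∈ Finset.univ, (0:ℂ) ≤ (Aᴴ * A).diag j := by
    intro j _
    rw [Matrix.diag_apply, hdiag j]
    exact dotProduct_star_self_nonneg _
  rw [Matrix.trace] at h
  have := (Finset.sum_eq_zero_iff_of_nonneg hnn).mp h
  ext i j
  have hj := this j (Finset.mem_univ j)
  rw [Matrix.diag_apply, hdiag j] at hj
  have := dotProduct_star_self_eq_zero.mp hj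
  exact congrFun this i

lemma mul_eq_zero_of_trace_mul_eq_zero {A B : Matrix (Fin n) (Fin n) ℂ}
    (hA : A.PosSemidef) (hB : B.PosSemidef) (h : (A * B).trace = 0) : A * B = 0 := by
  set sA := psqrt A with hsA
  set sB := psqrt B with hsB
  have hAe : sA * sA = A := psqrt_mul_self hA
  have hBe : sB * sB = B := psqrt_mul_self hB
  have hC : ((sA * sB)ᴴ * (sA * sB)).trace = 0 := by
    rw [Matrix.conjTranspose_mul, (psqrt_psd A).1.eq, (psqrt_psd B).1.eq]
    calc (sB * sA * (sA * sB)).trace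
        = (sB * (sA * sA * sB)).trace := by rw [Matrix.mul_assoc sB sA (sA * sB),
            Matrix.mul_assoc sA sA sB]
      _ = ((sA * sA * sB) * sB).trace := by rw [Matrix.trace_mul_comm]
      _ = (A * B).trace := by rw [Matrix.mul_assoc, hBe, hAe]
      _ = 0 := h
  have hC0 : sA * sB = 0 := eq_zero_of_trace_conjTranspose_mul_self hC
  calc A * B = sA * (sA * sB) * sB := by rw [← Matrix.mul_assoc, hAe, Matrix.mul_assoc, hBe]
    _ = 0 := by rw [hC0, Matrix.mul_zero, Matrix.zero_mul]

lemma quad_eq_trace (M : Matrix (Fin n) (Fin n) ℂ) (x : Fin n → ℂ) :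
    dotProduct (star x) (M.mulVec x) = (Matrix.vecMulVec x (star x) * M).trace := by
  simp only [Matrix.trace, Matrix.diag_apply, Matrix.mul_apply, Matrix.vecMulVec_apply,
    dotProduct, Matrix.mulVec, Pi.star_apply]
  rw [Finset.sum_comm]
  apply Finset.sum_congr rfl
  intro j _
  rw [Finset.mul_sum]
  apply Finset.sum_congr rfl
  intro i _
  ring

lemma vecMulVec_psd (x : Fin n → ℂ) : (Matrix.vecMulVec x (star x)).PosSemidef := by
  have : Matrix.vecMulVec x (star x) = Matrix.replicateCol (Fin 1) x * (Matrix.replicateCol (Fin 1) x)ᴴ := by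
    rw [Matrix.conjTranspose_replicateCol, Matrix.vecMulVec_eq (Fin 1)]
    rfl
  rw [this]
  exact Matrix.posSemidef_self_mul_conjTranspose _

lemma cp_psd {E : Matrix (Fin n) (Fin n) ℂ → Matrix (Fin n) (Fin n) ℂ} (hCP : IsCP E)
    {B : Matrix (Fin n) (Fin n) ℂ} (hB : B.PosSemidef) : (E B).PosSemidef := by
  have hA : (B.submatrix (Prod.snd : Fin 1 × Fin n → Fin n) Prod.snd).PosSemidef :=
    hB.submatrix _
  have h1 := hCP 1 _ hA
  have h2 : tensorMap E 1 (B.submatrix Prod.snd Prod.snd)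
      = (E B).submatrix (Prod.snd : Fin 1 × Fin n → Fin n) Prod.snd := by
    ext p q
    rfl
  rw [h2] at h1
  have h3 := h1.submatrix (fun j : Fin n => ((0 : Fin 1), j))
  convert h3 using 2
  rfl

lemma proj_psd {P : Matrix (Fin n) (Fin n) ℂ} (hP : IsProj P) : P.PosSemidef := by
  have : P = Pᴴ * P := by rw [hP.1.eq, hP.2]
  rw [this]
  exact Matrix.posSemidef_conjTranspose_mul_self _

lemma proj_compl {P : Matrix (Fin n) (Fin n) ℂ} (hP : IsProj P) : IsProj (1 - P) := by
  constructor
  · unfold Matrix.IsHermitian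
    rw [Matrix.conjTranspose_sub, Matrix.conjTranspose_one, hP.1.eq]
  · have h : (1 - P) * (1 - P) = 1 - P - P + P * P := by noncomm_ring
    rw [h, hP.2]
    abel

lemma adj_psd {E E' : Matrix (Fin n) (Fin n) ℂ → Matrix (Fin n) (Fin n) ℂ}
    (hCP : IsCP E)
    (hadj : ∀ A B : Matrix (Fin n) (Fin n) ℂ, (E A * B).trace = (A * E' B).trace)
    {R : Matrix (Fin n) (Fin n) ℂ} (hR : R.PosSemidef) : (E' R).PosSemidef := by
  set M := E' R with hM
  have key : ∀ x : Fin n → ℂ,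
      (0:ℂ) ≤ dotProduct (star x) (M.mulVec x) := by
    intro x
    rw [quad_eq_trace, ← hadj]
    exact trace_mul_psd_nonneg (cp_psd hCP (vecMulVec_psd x)) hR
  refine Matrix.PosSemidef.of_dotProduct_mulVec_nonneg ?_ ?_
  · rw [Matrix.isHermitian_iff_isSymmetric]
    rw [LinearMap.isSymmetric_iff_inner_map_self_real]
    intro v
    have h1 : (inner ℂ (Matrix.toEuclideanLin M v) v : ℂ)
        = starRingEnd ℂ (dotProduct (star ((WithLp.equiv 2 (Fin n → ℂ)) v))
            (M.mulVec ((WithLp.equiv 2 (Fin n → ℂ)) v))) := by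
      rw [Matrix.toEuclideanLin_apply]
      simp only [PiLp.inner_apply, RCLike.inner_apply, WithLp.equiv_apply,
        WithLp.equiv_symm_apply, dotProduct, Pi.star_apply, map_sum, _root_.map_mul,
        Complex.conj_conj, starRingEnd_apply, star_star]
    rw [h1]
    have h2 := key ((WithLp.equiv 2 (Fin n → ℂ)) v)
    have h3 : starRingEnd ℂ (dotProduct (star ((WithLp.equiv 2 (Fin n → ℂ)) v))
        (M.mulVec ((WithLp.equiv 2 (Fin n → ℂ)) v)))
        = dotProduct (star ((WithLp.equiv 2 (Fin n → ℂ)) v))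
            (M.mulVec ((WithLp.equiv 2 (Fin n → ℂ)) v)) := by
      have him : (dotProduct (star ((WithLp.equiv 2 (Fin n → ℂ)) v))
          (M.mulVec ((WithLp.equiv 2 (Fin n → ℂ)) v))).im = 0 := by
        have := (Complex.le_def.mp h2).2
        simpa using this.symm
      exact Complex.conj_eq_iff_im.mpr him
    rw [h3]
    exact h3
  · exact key

lemma matrix_eq_zero_of_mulVec {A : Matrix (Fin n) (Fin n) ℂ}
    (h : ∀ v, A.mulVec v = 0) : A = 0 := by
  ext i j
  have := congrFun (h (Pi.single j 1)) i
  simpa [Matrix.mulVec, dotProduct, Pi.single_apply, Finset.sum_ite_eq] using this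

lemma galois_aux {E E' : Matrix (Fin n) (Fin n) ℂ → Matrix (Fin n) (Fin n) ℂ}
    (hCP : IsCP E)
    (hadj : ∀ A B : Matrix (Fin n) (Fin n) ℂ, (E A * B).trace = (A * E' B).trace)
    {Q : Matrix (Fin n) (Fin n) ℂ} (hQ : IsProj Q)
    {R : Matrix (Fin n) (Fin n) ℂ} (hR : IsProj R) :
    (∀ v : Fin n → ℂ, R.mulVec v = v → (E' (1 - Q)).mulVec v = 0) ↔ Q * E R = E R := by
  have hQ' : (1 - Q).PosSemidef := proj_psd (proj_compl hQ)
  have hM : (E' (1 - Q)).PosSemidef := adj_psd hCP hadj hQ'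
  have hRp : R.PosSemidef := proj_psd hR
  have hER : (E R).PosSemidef := cp_psd hCP hRp
  constructor
  · intro h
    have hMR : E' (1 - Q) * R = 0 := by
      apply matrix_eq_zero_of_mulVec
      intro v
      rw [← Matrix.mulVec_mulVec]
      apply h
      rw [Matrix.mulVec_mulVec, hR.2]
    have ht : ((1 - Q) * E R).trace = 0 := by
      rw [Matrix.trace_mul_comm, hadj, Matrix.trace_mul_comm, hMR, Matrix.trace_zero]
    have h0 : (1 - Q) * E R = 0 := mul_eq_zero_of_trace_mul_eq_zero hQ' hER ht
    have h1 : E R - Q * E R = 0 := by rw [← h0]; noncomm_ring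
    exact (sub_eq_zero.mp h1).symm
  · intro h v hv
    have h0 : (1 - Q) * E R = 0 := by rw [Matrix.sub_mul, Matrix.one_mul, h, sub_self]
    have ht : (R * E' (1 - Q)).trace = 0 := by
      rw [← hadj, Matrix.trace_mul_comm, h0, Matrix.trace_zero]
    have hRM : R * E' (1 - Q) = 0 := mul_eq_zero_of_trace_mul_eq_zero hRp hM ht
    have hMR : E' (1 - Q) * R = 0 := by
      have h2 := congrArg Matrix.conjTranspose hRM
      rwa [Matrix.conjTranspose_mul, hM.1.eq, hR.1.eq, Matrix.conjTranspose_zero] at h2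
    calc (E' (1 - Q)).mulVec v = (E' (1 - Q)).mulVec (R.mulVec v) := by rw [hv]
      _ = (E' (1 - Q) * R).mulVec v := Matrix.mulVec_mulVec v _ _
      _ = 0 := by rw [hMR, Matrix.zero_mulVec]

end WlpAux

theorem wlp_sp_galois {n : ℕ}
    (E E' : Matrix (Fin n) (Fin n) ℂ → Matrix (Fin n) (Fin n) ℂ)
    (hE : IsCPTN E) (hE'l : IsLinearMap ℂ E')
    (hadj : ∀ A B : Matrix (Fin n) (Fin n) ℂ, (E A * B).trace = (A * E' B).trace)
    (P Q : Matrix (Fin n) (Fin n) ℂ) (hP : IsProj P) (hQ : IsProj Q)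
    -- `W` is the projector onto `wlp(Q) = ker(E†(Q⊥))`
    (W : Matrix (Fin n) (Fin n) ℂ) (hW : IsProj W)
    (hWc : ∀ v : Fin n → ℂ, W.mulVec v = v ↔ (E' (1 - Q)).mulVec v = 0)
    -- `S` is the projector onto `sp(P) = supp(E(P))`
    (S : Matrix (Fin n) (Fin n) ℂ) (hS : IsProj S)
    (hSc : ∀ v : Fin n → ℂ, S.mulVec v = 0 ↔ (E P).mulVec v = 0) :
    -- Galois connection: `P ⊑ wlp(Q)` iff `sp(P) ⊑ Q`
    ((∀ v : Fin n → ℂ, P.mulVec v = v → (E' (1 - Q)).mulVec v = 0) ↔ Q * E P = E P) ∧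
    -- `sp(wlp(Q)) ⊑ Q`
    (Q * E W = E W) ∧
    -- `P ⊑ wlp(sp(P))`
    (∀ v : Fin n → ℂ, P.mulVec v = v → (E' (1 - S)).mulVec v = 0) := by
  
  obtain ⟨hEl, hECP, hETNI⟩ := hE
  refine ⟨WlpAux.galois_aux hECP hadj hQ hP,
    (WlpAux.galois_aux hECP hadj hQ hW).mp (fun v hv => (hWc v).mp hv), ?_⟩
  intro v hv
  have hS' : (1 - S).PosSemidef := WlpAux.proj_psd (WlpAux.proj_compl hS)
  have hN : (E' (1 - S)).PosSemidef := WlpAux.adj_psd hECP hadj hS'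
  have hPp : P.PosSemidef := WlpAux.proj_psd hP
  have hEPS : E P * (1 - S) = 0 := by
    apply WlpAux.matrix_eq_zero_of_mulVec
    intro w
    rw [← Matrix.mulVec_mulVec]
    apply (hSc _).mp
    rw [Matrix.mulVec_mulVec]
    have h1 : S * (1 - S) = 0 := by rw [Matrix.mul_sub, Matrix.mul_one, hS.2, sub_self]
    rw [h1, Matrix.zero_mulVec]
  have ht : (P * E' (1 - S)).trace = 0 := by
    rw [← hadj, hEPS, Matrix.trace_zero]
  have hPN : P * E' (1 - S) = 0 :=
    WlpAux.mul_eq_zero_of_trace_mul_eq_zero hPp hN ht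
  have hNP : E' (1 - S) * P = 0 := by
    have h2 := congrArg Matrix.conjTranspose hPN
    rwa [Matrix.conjTranspose_mul, hN.1.eq, hP.1.eq, Matrix.conjTranspose_zero] at h2
  calc (E' (1 - S)).mulVec v = (E' (1 - S)).mulVec (P.mulVec v) := by rw [hv]
    _ = (E' (1 - S) * P).mulVec v := Matrix.mulVec_mulVec v _ _
    _ = 0 := by rw [hNP, Matrix.zero_mulVec]
end
end
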